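/- Let δ₁ > 0, δ₂ > 0, s ≥ 0 and r ≥ 0. With h(s,τ) = s δ₁ / ( s δ₂ (1 - e^{-2τδ₁}) + δ₁ e^{-2τδ₁} ), the phase integral satisfies G(s,r) := ∫_0^r h(s,τ) dτ = (1/(2δ₂)) ln[ ( δ₁ - s δ₂ + s δ₂ e^{2rδ₁} ) / δ₁ ]. -/

import Mathlib

open intervalIntegral

/-- For the complex Ginzburg–Landau equation (σ = 1, β = 1), with density flow
h(s,τ) = sδ₁/(sδ₂(1 - e^{-2τδ₁}) + δ₁ e^{-2τδ₁}), the phase integral is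
G(s,r) = ∫_0^r h(s,τ) dτ = (1/(2δ₂)) ln[(δ₁ - sδ₂ + sδ₂ e^{2rδ₁})/δ₁]. -/
theorem stmt15 (δ₁ δ₂ s r : ℝ) (hδ₁ : 0 < δ₁) (hδ₂ : 0 < δ₂) (hs : 0 ≤ s)
    (hr : 0 ≤ r)
    (h : ℝ → ℝ)
    (hdef : ∀ τ : ℝ, h τ = s * δ₁ /
      (s * δ₂ * (1 - Real.exp (-2 * τ * δ₁)) + δ₁ * Real.exp (-2 * τ * δ₁))) :
    (∫ τ in (0:ℝ)..r, h τ) =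
      (1 / (2 * δ₂)) *
        Real.log ((δ₁ - s * δ₂ + s * δ₂ * Real.exp (2 * r * δ₁)) / δ₁) := by
  set D : ℝ → ℝ := fun τ => δ₁ - s * δ₂ + s * δ₂ * Real.exp (2 * τ * δ₁) with hD
  have hDpos : ∀ τ ∈ Set.uIcc (0:ℝ) r, 0 < D τ := by
    intro τ hτ
    rw [Set.uIcc_of_le hr] at hτ
    have h1 : (1:ℝ) ≤ Real.exp (2 * τ * δ₁) := by
      have : (0:ℝ) ≤ 2 * τ * δ₁ := by nlinarith [hτ.1, hδ₁.le, mul_nonneg hτ.1 hδ₁.le]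
      exact Real.one_le_exp this
    have h2 : 0 ≤ s * δ₂ := mul_nonneg hs hδ₂.le
    simp only [hD]
    nlinarith
  have hdenpos : ∀ τ ∈ Set.uIcc (0:ℝ) r,
      0 < s * δ₂ * (1 - Real.exp (-2 * τ * δ₁)) + δ₁ * Real.exp (-2 * τ * δ₁) := by
    intro τ hτ
    have hE : Real.exp (-2 * τ * δ₁) = (Real.exp (2 * τ * δ₁))⁻¹ := by
      rw [← Real.exp_neg]; ring_nf
    have hEpos := Real.exp_pos (2 * τ * δ₁)
    have := hDpos τ hτ
    have key : s * δ₂ * (1 - Real.exp (-2 * τ * δ₁)) + δ₁ * Real.exp (-2 * τ * δ₁)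
        = D τ * (Real.exp (2 * τ * δ₁))⁻¹ := by
      rw [hE]; field_simp [hD]; ring
    rw [key]
    positivity
  have hderiv : ∀ τ ∈ Set.uIcc (0:ℝ) r,
      HasDerivAt (fun t => (1/(2*δ₂)) * Real.log (D t / δ₁)) (h τ) τ := by
    intro τ hτ
    have hDτ := hDpos τ hτ
    have hlin : HasDerivAt (fun t : ℝ => 2 * t * δ₁) (2 * δ₁) τ := by
      simpa using ((hasDerivAt_id τ).const_mul 2).mul_const δ₁
    have hexp : HasDerivAt (fun t : ℝ => Real.exp (2 * t * δ₁))
        (Real.exp (2 * τ * δ₁) * (2 * δ₁)) τ :=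
      hlin.exp
    have hED : HasDerivAt D (s * δ₂ * (Real.exp (2 * τ * δ₁) * (2 * δ₁))) τ := by
      simpa [hD] using (hexp.const_mul (s * δ₂)).const_add (δ₁ - s * δ₂)
    have hDiv : HasDerivAt (fun t => D t / δ₁)
        (s * δ₂ * (Real.exp (2 * τ * δ₁) * (2 * δ₁)) / δ₁) τ := hED.div_const δ₁
    have hne : D τ / δ₁ ≠ 0 := by positivity
    have hlog := hDiv.log hne
    have hfinal := hlog.const_mul (1/(2*δ₂))
    refine hfinal.congr_deriv (Eq.symm ?_)
    rw [hdef τ]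
    have hE : Real.exp (-2 * τ * δ₁) = (Real.exp (2 * τ * δ₁))⁻¹ := by
      rw [← Real.exp_neg]; ring_nf
    have hEpos := Real.exp_pos (2 * τ * δ₁)
    rw [hE]
    have hDne : D τ ≠ 0 := hDτ.ne'
    simp only [hD] at hDne ⊢
    have hX : s * Real.exp (δ₁ * τ * 2) * δ₂ - s * δ₂ + δ₁ ≠ 0 := by
      have he : (2:ℝ) * τ * δ₁ = δ₁ * τ * 2 := by ring
      rw [he] at hDne
      intro h0; apply hDne; linarith
    field_simp
    congr 1
    ring
  have hcont : IntervalIntegrable h MeasureTheory.volume 0 r := by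
    have hfun : Set.EqOn h (fun τ => s * δ₁ /
        (s * δ₂ * (1 - Real.exp (-2 * τ * δ₁)) + δ₁ * Real.exp (-2 * τ * δ₁)))
        (Set.uIcc 0 r) := fun τ _ => hdef τ
    apply (ContinuousOn.intervalIntegrable ?_)
    apply ContinuousOn.congr ?_ hfun
    apply ContinuousOn.div continuousOn_const
    · fun_prop
    · intro τ hτ
      exact (hdenpos τ hτ).ne'
  have key := intervalIntegral.integral_eq_sub_of_hasDerivAt hderiv hcont
  rw [key]
  have hD0 : D 0 = δ₁ := by simp [hD]
  rw [hD0, div_self hδ₁.ne', Real.log_one, mul_zero, sub_zero]
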